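/- Let 0 ≠ w ∈ ℝ^d and λ > 0, and for f ∈ ℝ^{n×d} and a ∈ ℝⁿ set E(x;f,a,w) = ½‖f−x‖_F² + λ‖xw−a‖. If f, f̃ ∈ ℝ^{n×d} and a, ã ∈ ℝⁿ satisfy ‖fw−a‖ < ‖f̃w−ã‖, then min_{x∈ℝ^{n×d}} E(x;f,a,w) < min_{x∈ℝ^{n×d}} E(x;f̃,ã,w). -/

import Mathlib

open scoped Classical

noncomputable section

private def phi (lam W r : ℝ) : ℝ :=
  if r ≤ lam * W then r ^ 2 / (2 * W) else lam * r - lam ^ 2 * W / 2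

/-- Lower bound: φ(r) is a lower bound for the energy. -/
private lemma lb_aux (n d : ℕ) (w : Fin d → ℝ) (lam : ℝ) (hlam : 0 < lam)
    (hW : 0 < ∑ j, w j ^ 2)
    (f : Fin n → Fin d → ℝ) (a : Fin n → ℝ) (x : Fin n → Fin d → ℝ) :
    phi lam (∑ j, w j ^ 2) (Real.sqrt (∑ i, (∑ j, f i j * w j - a i) ^ 2))
      ≤ (1 / 2) * (∑ i, ∑ j, (f i j - x i j) ^ 2)
        + lam * Real.sqrt (∑ i, (∑ j, x i j * w j - a i) ^ 2) := by
  set W := ∑ j, w j ^ 2 with hWdef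
  set b : Fin n → ℝ := fun i => ∑ j, f i j * w j - a i with hb
  set u : Fin n → ℝ := fun i => ∑ j, x i j * w j - a i with hu
  set r := Real.sqrt (∑ i, b i ^ 2) with hr
  set s := Real.sqrt (∑ i, u i ^ 2) with hs
  have hr0 : 0 ≤ r := Real.sqrt_nonneg _
  have hs0 : 0 ≤ s := Real.sqrt_nonneg _
  have hr2 : r ^ 2 = ∑ i, b i ^ 2 := Real.sq_sqrt (by positivity)
  have hs2 : s ^ 2 = ∑ i, u i ^ 2 := Real.sq_sqrt (by positivity)
  -- Cauchy–Schwarz per row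
  have hrow : ∀ i, (b i - u i) ^ 2 ≤ (∑ j, (f i j - x i j) ^ 2) * W := by
    intro i
    have : b i - u i = ∑ j, (f i j - x i j) * w j := by
      simp only [hb, hu]
      rw [Finset.sum_congr rfl (fun j _ => sub_mul (f i j) (x i j) (w j)),
        Finset.sum_sub_distrib]
      ring
    rw [this]
    exact Finset.sum_mul_sq_le_sq_mul_sq _ _ _
  have hsum : ∑ i, (b i - u i) ^ 2 ≤ (∑ i, ∑ j, (f i j - x i j) ^ 2) * W := by
    rw [Finset.sum_mul]
    exact Finset.sum_le_sum (fun i _ => hrow i)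
  -- ∑ b u ≤ r s
  have hbu : ∑ i, b i * u i ≤ r * s := by
    have h1 : (∑ i, b i * u i) ^ 2 ≤ (r * s) ^ 2 := by
      rw [mul_pow, hr2, hs2]; exact Finset.sum_mul_sq_le_sq_mul_sq _ _ _
    calc ∑ i, b i * u i ≤ |∑ i, b i * u i| := le_abs_self _
      _ = Real.sqrt ((∑ i, b i * u i) ^ 2) := (Real.sqrt_sq_eq_abs _).symm
      _ ≤ Real.sqrt ((r * s) ^ 2) := Real.sqrt_le_sqrt h1
      _ = r * s := Real.sqrt_sq (by positivity)
  have hdist : (r - s) ^ 2 ≤ ∑ i, (b i - u i) ^ 2 := by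
    have expand : ∑ i, (b i - u i) ^ 2
        = (∑ i, b i ^ 2) - 2 * (∑ i, b i * u i) + ∑ i, u i ^ 2 := by
      rw [Finset.sum_congr rfl (fun i _ => by ring :
        ∀ i ∈ Finset.univ, (b i - u i) ^ 2 = b i ^ 2 - 2 * (b i * u i) + u i ^ 2)]
      rw [Finset.sum_add_distrib, Finset.sum_sub_distrib, Finset.mul_sum]
    nlinarith [hbu, hr2, hs2]
  have hF : (r - s) ^ 2 / (2 * W) ≤ (1 / 2) * (∑ i, ∑ j, (f i j - x i j) ^ 2) := by
    rw [div_le_iff₀ (by positivity)]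
    nlinarith [le_trans hdist hsum]
  have hgoal : phi lam W r ≤ (r - s) ^ 2 / (2 * W) + lam * s := by
    unfold phi
    split_ifs with hc
    · have hkey : r ^ 2 ≤ (r - s) ^ 2 + lam * s * (2 * W) := by
        nlinarith [mul_nonneg hs0 hs0, mul_nonneg hs0 (sub_nonneg.2 hc)]
      rw [div_add' _ _ _ (by positivity : (2:ℝ) * W ≠ 0),
        div_le_div_iff₀ (by positivity) (by positivity)]
      nlinarith [mul_le_mul_of_nonneg_right hkey (by positivity : (0:ℝ) ≤ 2 * W)]
    · set t := (r - s) ^ 2 / (2 * W) with htdef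
      have ht : t * (2 * W) = (r - s) ^ 2 :=
        div_mul_cancel₀ _ (by positivity : (2:ℝ) * W ≠ 0)
      nlinarith [sq_nonneg (r - s - lam * W), ht, hW]
  calc phi lam W r ≤ (r - s) ^ 2 / (2 * W) + lam * s := hgoal
    _ ≤ (1 / 2) * (∑ i, ∑ j, (f i j - x i j) ^ 2) + lam * s :=
        add_le_add_left hF _

private lemma phi_strict (lam W r r' : ℝ) (hlam : 0 < lam) (hW : 0 < W)
    (hr : 0 ≤ r) (hrr : r < r') : phi lam W r < phi lam W r' := by
  have h1 : r ^ 2 / (2 * W) * (2 * W) = r ^ 2 :=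
    div_mul_cancel₀ _ (by positivity : (2:ℝ) * W ≠ 0)
  have h2 : r' ^ 2 / (2 * W) * (2 * W) = r' ^ 2 :=
    div_mul_cancel₀ _ (by positivity : (2:ℝ) * W ≠ 0)
  unfold phi
  split_ifs with ha hb hb
  · nlinarith
  · push_neg at hb
    nlinarith [h1, hW, sq_nonneg (lam * W - r), mul_pos hlam hW]
  · push_neg at ha; linarith
  · push_neg at ha hb; nlinarith

private lemma ub_aux (n d : ℕ) (w : Fin d → ℝ) (lam : ℝ) (hlam : 0 < lam)
    (hW : 0 < ∑ j, w j ^ 2)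
    (f : Fin n → Fin d → ℝ) (a : Fin n → ℝ) :
    ∃ x : Fin n → Fin d → ℝ,
      (1 / 2) * (∑ i, ∑ j, (f i j - x i j) ^ 2)
        + lam * Real.sqrt (∑ i, (∑ j, x i j * w j - a i) ^ 2)
      = phi lam (∑ j, w j ^ 2) (Real.sqrt (∑ i, (∑ j, f i j * w j - a i) ^ 2)) := by
  set W := ∑ j, w j ^ 2 with hWdef
  set b : Fin n → ℝ := fun i => ∑ j, f i j * w j - a i with hb
  set r := Real.sqrt (∑ i, b i ^ 2) with hr
  have hr0 : 0 ≤ r := Real.sqrt_nonneg _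
  have hr2 : r ^ 2 = ∑ i, b i ^ 2 := Real.sq_sqrt (by positivity)
  set t : ℝ := if r ≤ lam * W then 1 else lam * W / r with htdef
  have ht0 : 0 ≤ t := by
    rw [htdef]; split_ifs with hc
    · norm_num
    · push_neg at hc
      have : 0 < r := lt_trans (mul_pos hlam hW) hc
      positivity
  have ht1 : t ≤ 1 := by
    rw [htdef]; split_ifs with hc
    · exact le_refl 1
    · push_neg at hc
      rw [div_le_one (lt_trans (mul_pos hlam hW) hc)]
      linarith
  refine ⟨fun i j => f i j - t * b i * w j / W, ?_⟩
  have hA : ∑ i, ∑ j, (f i j - (f i j - t * b i * w j / W)) ^ 2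
      = t ^ 2 * r ^ 2 / W := by
    have : ∀ i, ∑ j, (f i j - (f i j - t * b i * w j / W)) ^ 2
        = (t * b i / W) ^ 2 * W := by
      intro i
      rw [hWdef, Finset.mul_sum]
      refine Finset.sum_congr rfl fun j _ => by field_simp; ring
    have h1 : ∑ i, (t * b i / W) ^ 2 = (t / W) ^ 2 * ∑ i, b i ^ 2 := by
      rw [Finset.mul_sum]
      exact Finset.sum_congr rfl fun i _ => by ring
    rw [Finset.sum_congr rfl fun i _ => this i, ← Finset.sum_mul, h1, ← hr2]
    field_simp
  have hInner : ∀ i, ∑ j, (f i j - t * b i * w j / W) * w j - a i = (1 - t) * b i := by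
    intro i
    have : ∑ j, (f i j - t * b i * w j / W) * w j
        = (∑ j, f i j * w j) - t * b i / W * ∑ j, w j ^ 2 := by
      rw [Finset.mul_sum, ← Finset.sum_sub_distrib]
      exact Finset.sum_congr rfl fun j _ => by ring
    rw [this, ← hWdef]
    field_simp [hb]
    ring
  have hB : Real.sqrt (∑ i, (∑ j, (f i j - t * b i * w j / W) * w j - a i) ^ 2)
      = (1 - t) * r := by
    rw [Finset.sum_congr rfl fun i _ => by rw [hInner i]]
    have : ∑ i, ((1 - t) * b i) ^ 2 = (1 - t) ^ 2 * ∑ i, b i ^ 2 := by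
      rw [Finset.mul_sum]; exact Finset.sum_congr rfl fun i _ => by ring
    rw [this, Real.sqrt_mul (by positivity), Real.sqrt_sq (by linarith), hr]
  rw [hA, hB]
  unfold phi
  rw [htdef]
  split_ifs with hc
  · field_simp
    ring
  · push_neg at hc
    have hrpos : 0 < r := lt_trans (mul_pos hlam hW) hc
    field_simp
    ring

/-- **Lemma 3.2 (comparison part).** If `‖fw−a‖ < ‖f̃w−ã‖` then the minimal value of
`E(·; f, a, w)` is strictly smaller than the minimal value of `E(·; f̃, ã, w)`. -/
theorem second_order_tv_prox_value_strict_mono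
    (n d : ℕ) (w : Fin d → ℝ) (hw : w ≠ 0) (lam : ℝ) (hlam : 0 < lam)
    (E : (Fin n → Fin d → ℝ) → (Fin n → Fin d → ℝ) → (Fin n → ℝ) → ℝ)
    (hE : ∀ x f a, E x f a = (1 / 2) * (∑ i, ∑ j, (f i j - x i j) ^ 2)
        + lam * Real.sqrt (∑ i, (∑ j, x i j * w j - a i) ^ 2))
    (f ftil : Fin n → Fin d → ℝ) (a atil : Fin n → ℝ)
    (h : Real.sqrt (∑ i, (∑ j, f i j * w j - a i) ^ 2)
       < Real.sqrt (∑ i, (∑ j, ftil i j * w j - atil i) ^ 2)) :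
    sInf (Set.range fun x => E x f a) < sInf (Set.range fun x => E x ftil atil) := by
  have hW : 0 < ∑ j, w j ^ 2 := by
    obtain ⟨j, hj⟩ := Function.ne_iff.1 hw
    exact Finset.sum_pos' (fun j _ => sq_nonneg _)
      ⟨j, Finset.mem_univ j, (sq_nonneg (w j)).lt_of_ne (Ne.symm (pow_ne_zero 2 hj))⟩
  set W := ∑ j, w j ^ 2 with hWdef
  set r := Real.sqrt (∑ i, (∑ j, f i j * w j - a i) ^ 2) with hrdef
  set rt := Real.sqrt (∑ i, (∑ j, ftil i j * w j - atil i) ^ 2) with hrtdef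
  have hphi : phi lam W r < phi lam W rt :=
    phi_strict lam W r rt hlam hW (Real.sqrt_nonneg _) h
  have hle1 : sInf (Set.range fun x => E x f a) ≤ phi lam W r := by
    obtain ⟨x, hx⟩ := ub_aux n d w lam hlam hW f a
    refine csInf_le ⟨phi lam W r, ?_⟩ ⟨x, by show E x f a = phi lam W r; rw [hE]; exact hx⟩
    rintro y ⟨z, rfl⟩
    show phi lam W r ≤ E z f a
    rw [hE]
    exact lb_aux n d w lam hlam hW f a z
  have hle2 : phi lam W rt ≤ sInf (Set.range fun x => E x ftil atil) := by
    refine le_csInf (Set.range_nonempty _) ?_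
    rintro y ⟨z, rfl⟩
    show phi lam W rt ≤ E z ftil atil
    rw [hE]
    exact lb_aux n d w lam hlam hW ftil atil z
  calc sInf (Set.range fun x => E x f a) ≤ phi lam W r := hle1
    _ < phi lam W rt := hphi
    _ ≤ sInf (Set.range fun x => E x ftil atil) := hle2
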